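/- Let $f: X \to \mathbb{R}$ be a convex function on a convex set $X \subseteq \mathbb{R}^n$ that is $\mu$-sharp, i.e., $f(x) - f^* \ge \mu \cdot \mathrm{dist}(x, X^*)$ for all $x \in X$, where $X^*$ is the (nonempty) optimal solution set and $f^* = \min_{x \in X} f(x)$. Let $x_0 \in X$ and $\rho > 0$, and define $\Delta = f(x_0) - \min_{x \in X}(f(x) + \frac{\rho}{2}\|x - x_0\|^2)$. If $f(x_0) - f^* \ge \mu^2/\rho$, then $\Delta \ge \frac{\mu^2}{2\rho}$. -/

import Mathlib

set_option maxHeartbeats 1000000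


/-- Sharpness case: lower bound `μ²/(2ρ)` on the proximal gap when the
optimality gap is at least `μ²/ρ`. -/
theorem stmt_2 {n : ℕ} (X : Set (EuclideanSpace ℝ (Fin n)))
    (hX : X.Nonempty) (hXconv : Convex ℝ X)
    (f : EuclideanSpace ℝ (Fin n) → ℝ) (hf : ConvexOn ℝ X f)
    (Xstar : Set (EuclideanSpace ℝ (Fin n))) (hXstarne : Xstar.Nonempty)
    (hXstarsub : Xstar ⊆ X)
    (fstar : ℝ) (hXstar : ∀ x ∈ Xstar, f x = fstar)
    (hmin : ∀ x ∈ X, fstar ≤ f x)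
    (μ : ℝ) (hμ : 0 < μ)
    (hsharp : ∀ x ∈ X, f x - fstar ≥ μ * Metric.infDist x Xstar)
    (x0 : EuclideanSpace ℝ (Fin n)) (hx0 : x0 ∈ X)
    (ρ : ℝ) (hρ : 0 < ρ)
    (xp : EuclideanSpace ℝ (Fin n)) (hxp : xp ∈ X)
    (hxpmin : ∀ x ∈ X, f xp + ρ / 2 * ‖xp - x0‖ ^ 2 ≤ f x + ρ / 2 * ‖x - x0‖ ^ 2)
    (Δ : ℝ) (hΔ : Δ = f x0 - (f xp + ρ / 2 * ‖xp - x0‖ ^ 2))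
    (hcase : f x0 - fstar ≥ μ ^ 2 / ρ) :
    Δ ≥ μ ^ 2 / (2 * ρ) := by
  set D := f x0 - fstar with hDdef
  have hDpos : 0 < D := lt_of_lt_of_le (by positivity) hcase
  set d := Metric.infDist x0 Xstar with hddef
  have hd0 : 0 ≤ d := Metric.infDist_nonneg
  have hdD : μ * d ≤ D := hsharp x0 hx0
  set t := μ ^ 2 / (ρ * D) with htdef
  have ht0 : 0 < t := by positivity
  have htD : t * (ρ * D) = μ ^ 2 := by
    rw [htdef]; exact div_mul_cancel₀ _ (mul_pos hρ hDpos).ne'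
  have ht1 : t ≤ 1 := by
    rw [htdef, div_le_one (by positivity)]
    have : ρ * (μ ^ 2 / ρ) ≤ ρ * D := by
      apply mul_le_mul_of_nonneg_left hcase hρ.le
    calc μ ^ 2 = ρ * (μ ^ 2 / ρ) := by field_simp
    _ ≤ ρ * D := this
  have key : ∀ η, d < η → t * D - ρ * t ^ 2 * η ^ 2 / 2 ≤ Δ := by
    intro η hη
    have hη0 : 0 ≤ η := le_of_lt (lt_of_le_of_lt hd0 hη)
    obtain ⟨y, hy, hdy⟩ := (Metric.infDist_lt_iff hXstarne).mp hη
    have hyX := hXstarsub hy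
    have hfy : f y = fstar := hXstar y hy
    set z := (1 - t) • x0 + t • y with hz
    have hzX : z ∈ X := hXconv hx0 hyX (by linarith) ht0.le (by ring)
    have hfz : f z ≤ (1 - t) * f x0 + t * f y :=
      hf.2 hx0 hyX (by linarith) ht0.le (by ring)
    have hzx0 : z - x0 = t • (y - x0) := by
      rw [hz]; module
    have hnorm : ‖z - x0‖ = t * ‖y - x0‖ := by
      rw [hzx0, norm_smul, Real.norm_of_nonneg ht0.le]
    have hyx0 : ‖y - x0‖ < η := by
      rw [← dist_eq_norm, dist_comm]
      exact hdy
    have hnormlt : ‖z - x0‖ ^ 2 ≤ t ^ 2 * η ^ 2 := by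
      rw [hnorm]
      have h1 : 0 ≤ ‖y - x0‖ := norm_nonneg _
      have h2 : 0 ≤ t := ht0.le
      calc (t * ‖y - x0‖) ^ 2 = t ^ 2 * ‖y - x0‖ ^ 2 := by ring
      _ ≤ t ^ 2 * η ^ 2 := by
        have h3 : ‖y - x0‖ ^ 2 ≤ η ^ 2 := by nlinarith
        exact mul_le_mul_of_nonneg_left h3 (sq_nonneg t)
    have hmain := hxpmin z hzX
    have : f z + ρ / 2 * ‖z - x0‖ ^ 2 ≤ (1 - t) * f x0 + t * fstar + ρ / 2 * (t ^ 2 * η ^ 2) := by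
      rw [← hfy]
      nlinarith
    rw [hΔ]
    nlinarith [hmain]
  have hlim : t * D - ρ * t ^ 2 * d ^ 2 / 2 ≤ Δ := by
    have hc : Filter.Tendsto (fun η : ℝ => t * D - ρ * t ^ 2 * η ^ 2 / 2)
        (nhdsWithin d (Set.Ioi d)) (nhds (t * D - ρ * t ^ 2 * d ^ 2 / 2)) := by
      apply Filter.Tendsto.mono_left _ nhdsWithin_le_nhds
      have hcont : Continuous fun η : ℝ => t * D - ρ * t ^ 2 * η ^ 2 / 2 :=
        continuous_const.sub ((continuous_const.mul (continuous_pow 2)).div_const 2)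
      exact hcont.tendsto d
    exact le_of_tendsto hc (Filter.eventually_of_mem self_mem_nhdsWithin (fun η hη => key η hη))
  have h1 : t * D = μ ^ 2 / ρ := by
    rw [htdef]; field_simp
  have h4 : ρ * t * d ≤ μ := by
    have h5 := mul_le_mul_of_nonneg_left hdD (by positivity : (0:ℝ) ≤ t * ρ)
    nlinarith [htD]
  have h2 : ρ * t ^ 2 * d ^ 2 / 2 ≤ μ ^ 2 / (2 * ρ) := by
    rw [div_le_div_iff₀ (by norm_num) (by positivity)]
    nlinarith [h4, mul_nonneg (mul_nonneg hρ.le ht0.le) hd0]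
  have h3 : μ ^ 2 / ρ - μ ^ 2 / (2 * ρ) = μ ^ 2 / (2 * ρ) := by
    field_simp; ring
  linarith [hlim, h2, h1.symm.le, h1.le]
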